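/- Let P be a finite PIP. The cardinality |P| equals Σ_{i≥1} (-1)^{i-1} · i · f_i(⊞_P), where f_i(⊞_P) is the number of pairs (I, M) with I a consistent downset of P and M ⊆ max I with |M| = i. -/
import Mathlib


open Finset

variable {P : Type*} [Fintype P] [DecidableEq P] [PartialOrder P]

/-- A subset is consistent if it contains no inconsistent pair. -/
def Consistent (incons : P → P → Prop) (S : Finset P) : Prop :=
  ∀ a ∈ S, ∀ b ∈ S, ¬ incons a b

/-- A downset (order ideal). -/
def IsDownset (I : Finset P) : Prop :=
  ∀ x ∈ I, ∀ y, y ≤ x → y ∈ I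

open Classical in
/-- The maximal elements of a finite set. -/
noncomputable def maxElems (I : Finset P) : Finset P :=
  I.filter (fun x => ∀ y ∈ I, ¬ x < y)

open Classical in
/-- The downset generated by a set. -/
noncomputable def downGen (A : Finset P) : Finset P :=
  Finset.univ.filter (fun x => ∃ a ∈ A, x ≤ a)

/-- A consistent antichain: the faces of the crossing complex `Δ_P`. -/
def ConsAntichain (incons : P → P → Prop) (A : Finset P) : Prop :=
  (∀ a ∈ A, ∀ b ∈ A, a ≠ b → ¬ a ≤ b) ∧ Consistent incons A

/-- A face of the cubical complex `⊞_P`: a pair (I, M) with I a consistent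
downset and M ⊆ max I. -/
def IsFace (incons : P → P → Prop) (I M : Finset P) : Prop :=
  IsDownset I ∧ Consistent incons I ∧ M ⊆ maxElems I

/-- The face-containment order on faces of `⊞_P`:
`C(I',M') ⊆ C(I,M)` iff `M' ⊆ M` and `I \ M ⊆ I' ⊆ I`. -/
def FaceLE (p q : Finset P × Finset P) : Prop :=
  p.2 ⊆ q.2 ∧ q.1 \ q.2 ⊆ p.1 ∧ p.1 ⊆ q.1

open Classical in
/-- `f_i(⊞_P)`: the number of `i`-dimensional faces `C(I,M)` of the cubical
complex `⊞_P`, i.e. pairs `(I, M)` with `I` a consistent downset, `M ⊆ max I`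
and `|M| = i`. -/
noncomputable def cubeFaceCount (incons : P → P → Prop) (i : ℕ) : ℕ :=
  (Finset.univ.filter (fun p : Finset P × Finset P =>
    IsDownset p.1 ∧ Consistent incons p.1 ∧ p.2 ⊆ maxElems p.1 ∧ p.2.card = i)).card

open Classical in
/-- `f_{j-1}(Δ_P)`: the number of consistent antichains of cardinality `j`. -/
noncomputable def antichainCount (incons : P → P → Prop) (j : ℕ) : ℕ :=
  (Finset.univ.filter (fun A : Finset P => ConsAntichain incons A ∧ A.card = j)).card

section Aux
variable {incons : P → P → Prop}

lemma mem_maxElems {I : Finset P} {x : P} :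
    x ∈ maxElems I ↔ x ∈ I ∧ ∀ y ∈ I, ¬ x < y := by
  classical simp [maxElems]

lemma mem_downGen {A : Finset P} {x : P} :
    x ∈ downGen A ↔ ∃ a ∈ A, x ≤ a := by
  classical simp [downGen]

lemma maxElems_consAntichain {I : Finset P} (hc : Consistent incons I) :
    ConsAntichain incons (maxElems I) := by
  constructor
  · intro a ha b hb hne hle
    rcases mem_maxElems.1 ha with ⟨haI, hmax⟩
    exact hmax b (mem_maxElems.1 hb).1 (lt_of_le_of_ne hle hne)
  · intro a ha b hb
    exact hc a (mem_maxElems.1 ha).1 b (mem_maxElems.1 hb).1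

lemma downGen_maxElems {I : Finset P} (hd : IsDownset I) :
    downGen (maxElems I) = I := by
  apply Finset.Subset.antisymm
  · intro x hx
    rcases mem_downGen.1 hx with ⟨a, ha, hxa⟩
    exact hd a (mem_maxElems.1 ha).1 x hxa
  · intro x hx
    rcases I.exists_le_maximal hx with ⟨b, hxb, hb⟩
    refine mem_downGen.2 ⟨b, mem_maxElems.2 ⟨hb.1, ?_⟩, hxb⟩
    intro y hy hlt
    exact absurd (hb.2 hy hlt.le) (not_le_of_gt hlt)

lemma downGen_isDownset (A : Finset P) : IsDownset (downGen A) := by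
  intro x hx y hyx
  rcases mem_downGen.1 hx with ⟨a, ha, hxa⟩
  exact mem_downGen.2 ⟨a, ha, hyx.trans hxa⟩

lemma downGen_consistent {A : Finset P} (hc : Consistent incons A)
    (hup : ∀ a b a' b', incons a b → a ≤ a' → b ≤ b' → incons a' b') :
    Consistent incons (downGen A) := by
  intro x hx y hy h
  rcases mem_downGen.1 hx with ⟨a, ha, hxa⟩
  rcases mem_downGen.1 hy with ⟨b, hb, hyb⟩
  exact hc a ha b hb (hup x y a b h hxa hyb)

lemma maxElems_downGen {A : Finset P}
    (hA : ∀ a ∈ A, ∀ b ∈ A, a ≠ b → ¬ a ≤ b) :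
    maxElems (downGen A) = A := by
  ext x
  rw [mem_maxElems]
  constructor
  · rintro ⟨hx, hmax⟩
    rcases mem_downGen.1 hx with ⟨a, ha, hxa⟩
    rcases eq_or_lt_of_le hxa with h | h
    · exact h ▸ ha
    · exact absurd (hmax a (mem_downGen.2 ⟨a, ha, le_refl a⟩)) (by simpa using h)
  · intro hx
    refine ⟨mem_downGen.2 ⟨x, hx, le_refl x⟩, ?_⟩
    intro y hy hlt
    rcases mem_downGen.1 hy with ⟨b, hb, hyb⟩
    have hxb : x < b := lt_of_lt_of_le hlt hyb
    exact hA x hx b hb (ne_of_lt hxb) hxb.le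

lemma powsum (A : Finset P) :
    ∑ M ∈ A.powerset, (-1 : ℤ) ^ M.card * (M.card : ℤ) =
      if A.card = 1 then -1 else 0 := by
  classical
  induction A using Finset.induction_on with
  | empty => simp
  | @insert a s ha ih =>
    rw [Finset.sum_powerset_insert ha]
    have h2 : ∑ M ∈ s.powerset, (-1:ℤ)^(insert a M).card * ((insert a M).card : ℤ)
        = ∑ M ∈ s.powerset, (-((-1:ℤ)^M.card * (M.card:ℤ)) - (-1:ℤ)^M.card) := by
      apply Finset.sum_congr rfl
      intro M hM
      have haM : a ∉ M := fun h => ha (Finset.mem_powerset.1 hM h)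
      rw [Finset.card_insert_of_notMem haM]
      push_cast
      ring
    rw [h2, Finset.sum_sub_distrib, Finset.sum_neg_distrib, ih,
      Finset.sum_powerset_neg_one_pow_card, Finset.card_insert_of_notMem ha]
    rcases Finset.eq_empty_or_nonempty s with rfl | hs
    · simp
    · have h1 : s.card ≠ 0 := Finset.card_ne_zero_of_mem hs.choose_spec
      have : s ≠ ∅ := hs.ne_empty
      simp only [this, if_neg]
      by_cases hc : s.card = 1 <;> simp [hc, h1] <;> omega

lemma powsum' (A : Finset P) :
    ∑ M ∈ A.powerset, (-1 : ℤ) ^ (M.card - 1) * (M.card : ℤ) =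
      if A.card = 1 then 1 else 0 := by
  have : ∑ M ∈ A.powerset, (-1 : ℤ) ^ (M.card - 1) * (M.card : ℤ)
      = -∑ M ∈ A.powerset, (-1 : ℤ) ^ M.card * (M.card : ℤ) := by
    rw [← Finset.sum_neg_distrib]
    apply Finset.sum_congr rfl
    intro M _
    rcases Nat.eq_zero_or_pos M.card with h | h
    · simp [h]
    · have h1 : M.card - 1 + 1 = M.card := Nat.succ_pred_eq_of_pos h
      have hc : (-1:ℤ)^M.card = -(-1:ℤ)^(M.card-1) := by
        conv_lhs => rw [← h1]
        rw [pow_succ]; ring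
      rw [hc]; ring
  rw [this, powsum]
  split <;> ring
end Aux

/-- The number of hyperplanes of `⊞_P` (i.e. `|P|`) equals
`Σ_{i≥1} (-1)^{i-1} · i · f_i(⊞_P)`. -/
theorem card_eq_alternating_sum (incons : P → P → Prop)
    (hirr : ∀ a, ¬ incons a a)
    (hsymm : ∀ a b, incons a b → incons b a)
    (hup : ∀ a b a' b', incons a b → a ≤ a' → b ≤ b' → incons a' b') :
    (Fintype.card P : ℤ) =
      ∑ i ∈ Finset.range (Fintype.card P + 1),
        (-1 : ℤ) ^ (i - 1) * (i : ℤ) * (cubeFaceCount incons i : ℤ) := by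
  classical
  set F : Finset (Finset P × Finset P) := univ.filter
    (fun p => IsDownset p.1 ∧ Consistent incons p.1 ∧ p.2 ⊆ maxElems p.1) with hF
  set G : Finset (Finset P × Finset P) := univ.filter
    (fun q => ConsAntichain incons q.1 ∧ q.2 ⊆ q.1) with hG
  have hmemF : ∀ p : Finset P × Finset P, p ∈ F ↔
      IsDownset p.1 ∧ Consistent incons p.1 ∧ p.2 ⊆ maxElems p.1 := by
    intro p; simp [hF]
  have hmemG : ∀ q : Finset P × Finset P, q ∈ G ↔
      ConsAntichain incons q.1 ∧ q.2 ⊆ q.1 := by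
    intro q; simp [hG]
  have hcount : ∀ i, (cubeFaceCount incons i : ℤ) =
      ((F.filter (fun p => p.2.card = i)).card : ℤ) := by
    intro i
    congr 1
    apply Finset.card_bij (fun p _ => p)
    · intro p hp
      simp only [cubeFaceCount, Finset.mem_filter, Finset.mem_univ, true_and] at hp
      rw [Finset.mem_filter, hmemF]
      exact ⟨⟨hp.1, hp.2.1, hp.2.2.1⟩, hp.2.2.2⟩
    · intro p _ q _ h; exact h
    · intro p hp
      rw [Finset.mem_filter, hmemF] at hp
      refine ⟨p, ?_, rfl⟩
      simp only [cubeFaceCount, Finset.mem_filter, Finset.mem_univ, true_and]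
      exact ⟨hp.1.1, hp.1.2.1, hp.1.2.2, hp.2⟩
  have step1 : ∑ i ∈ Finset.range (Fintype.card P + 1),
        (-1 : ℤ) ^ (i - 1) * (i : ℤ) * (cubeFaceCount incons i : ℤ)
      = ∑ p ∈ F, (-1 : ℤ) ^ (p.2.card - 1) * (p.2.card : ℤ) := by
    rw [← Finset.sum_fiberwise_of_maps_to (g := fun p : Finset P × Finset P => p.2.card)
      (t := Finset.range (Fintype.card P + 1))
      (fun p _ => Finset.mem_range.2 (Nat.lt_succ_of_le (Finset.card_le_univ p.2)))
      (fun p => (-1 : ℤ) ^ (p.2.card - 1) * (p.2.card : ℤ))]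
    apply Finset.sum_congr rfl
    intro i _
    rw [hcount i]
    have hin : ∑ p ∈ F.filter (fun p => p.2.card = i),
        ((-1 : ℤ) ^ (p.2.card - 1) * (p.2.card : ℤ))
        = ∑ _p ∈ F.filter (fun p => p.2.card = i), ((-1 : ℤ) ^ (i - 1) * (i : ℤ)) := by
      apply Finset.sum_congr rfl
      intro p hp
      rw [(Finset.mem_filter.1 hp).2]
    rw [hin, Finset.sum_const, nsmul_eq_mul]
    ring
  have step2 : ∑ p ∈ F, (-1 : ℤ) ^ (p.2.card - 1) * (p.2.card : ℤ)
      = ∑ q ∈ G, (-1 : ℤ) ^ (q.2.card - 1) * (q.2.card : ℤ) := by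
    apply Finset.sum_nbij' (i := fun p => (maxElems p.1, p.2))
      (j := fun q => (downGen q.1, q.2))
    · intro p hp
      rw [hmemF] at hp
      rw [hmemG]
      exact ⟨maxElems_consAntichain hp.2.1, hp.2.2⟩
    · intro q hq
      rw [hmemG] at hq
      rw [hmemF]
      refine ⟨downGen_isDownset q.1, downGen_consistent hq.1.2 hup, ?_⟩
      rw [maxElems_downGen hq.1.1]
      exact hq.2
    · intro p hp
      rw [hmemF] at hp
      exact Prod.ext (downGen_maxElems hp.1) rfl
    · intro q hq
      rw [hmemG] at hq
      exact Prod.ext (maxElems_downGen hq.1.1) rfl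
    · intro p _; rfl
  have step3 : ∑ q ∈ G, (-1 : ℤ) ^ (q.2.card - 1) * (q.2.card : ℤ)
      = ∑ A ∈ univ.filter (fun A : Finset P => ConsAntichain incons A),
          (if A.card = 1 then (1 : ℤ) else 0) := by
    rw [Finset.sum_finset_product G (univ.filter (fun A : Finset P => ConsAntichain incons A))
      (fun A => A.powerset)
      (fun q => by rw [hmemG]; simp [Finset.mem_powerset])]
    exact Finset.sum_congr rfl fun A _ => powsum' A
  have step5 : univ.filter (fun A : Finset P => ConsAntichain incons A ∧ A.card = 1)
      = univ.image (fun x : P => ({x} : Finset P)) := by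
    ext A
    simp only [Finset.mem_filter, Finset.mem_univ, true_and, Finset.mem_image,
      Finset.card_eq_one]
    constructor
    · rintro ⟨_, x, rfl⟩; exact ⟨x, rfl⟩
    · rintro ⟨x, rfl⟩
      refine ⟨⟨?_, ?_⟩, x, rfl⟩
      · intro a ha b hb hne _
        rw [Finset.mem_singleton] at ha hb
        exact hne (ha.trans hb.symm)
      · intro a ha b hb
        rw [Finset.mem_singleton.1 ha, Finset.mem_singleton.1 hb]
        exact hirr x
  have step4 : ∑ A ∈ univ.filter (fun A : Finset P => ConsAntichain incons A),
        (if A.card = 1 then (1 : ℤ) else 0)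
      = (Fintype.card P : ℤ) := by
    rw [Finset.sum_boole, Finset.filter_filter, step5,
      Finset.card_image_of_injective _ (fun x y h => by simpa using h), Finset.card_univ]
  rw [step1, step2, step3, step4]
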